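/- arXiv:0802.3652 — 2 statements merged into one kernel-verified Lean document; each statement's English description precedes it below -/
import Mathlib

section
/- For abelian groups A and B, there is a natural isomorphism Γ(A ⊕ B) ≅ Γ(A) ⊕ (A ⊗ B) ⊕ Γ(B), where the middle summand is embedded via the cross-effect (a, b) ↦ [ι₁(a), ι₂(b)] = γ(ι₁(a) + ι₂(b)) − γ(ι₁(a)) − γ(ι₂(b)). -/
open TensorProduct

universe u v

/-- A function between abelian groups is quadratic: it is even and its cross effect
`(a, b) ↦ f (a + b) - f a - f b` is bilinear. -/
def IsQuadratic {A B : Type*} [AddCommGroup A] [AddCommGroup B] (f : A → B) : Prop :=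
  (∀ a, f (-a) = f a) ∧
  ∃ bil : A →+ A →+ B, ∀ a b, f (a + b) - f a - f b = bil a b

/-- `γ : A → Γ` is a universal quadratic map: it is quadratic and every quadratic map
out of `A` factors uniquely through `γ` by a group homomorphism. -/
def IsUniversalQuadratic {A : Type u} {Γ : Type v} [AddCommGroup A] [AddCommGroup Γ]
    (γ : A → Γ) : Prop :=
  IsQuadratic γ ∧
  ∀ (B : Type max u v) [AddCommGroup B] (f : A → B), IsQuadratic f →
    ∃! F : Γ →+ B, ∀ a, F (γ a) = f a

lemma IsQuadratic.map_zero' {A B : Type*} [AddCommGroup A] [AddCommGroup B] {f : A → B}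
    (h : IsQuadratic f) : f 0 = 0 := by
  obtain ⟨-, bil, hb⟩ := h
  have h0 := hb 0 0
  simp only [add_zero, map_zero, AddMonoidHom.zero_apply] at h0
  have : -(f 0) = 0 := by rw [← h0]; abel
  simpa using this

lemma uq_hom_ext {A : Type u} {Γ : Type v} {C : Type max u v}
    [AddCommGroup A] [AddCommGroup Γ] [AddCommGroup C] {γ : A → Γ}
    (h : IsUniversalQuadratic γ) (F₁ F₂ : Γ →+ C)
    (hh : ∀ a, F₁ (γ a) = F₂ (γ a)) : F₁ = F₂ := by
  obtain ⟨⟨heven, bil, hbil⟩, huniv⟩ := h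
  have hq : IsQuadratic (fun a => F₁ (γ a)) := by
    refine ⟨fun a => by show F₁ (γ (-a)) = F₁ (γ a); rw [heven],
      AddMonoidHom.mk' (fun a => F₁.comp (bil a)) ?_, ?_⟩
    · intro a b; ext c; simp [map_add]
    · intro a b
      show F₁ (γ (a + b)) - F₁ (γ a) - F₁ (γ b) = F₁ (bil a b)
      rw [← map_sub, ← map_sub, hbil]
  obtain ⟨H, hH, hu⟩ := huniv C (fun a => F₁ (γ a)) hq
  exact (hu F₁ fun a => rfl).trans (hu F₂ fun a => (hh a).symm).symm

/-- For abelian groups `A` and `B`, there is an isomorphism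
`Γ(A ⊕ B) ≅ Γ(A) ⊕ (A ⊗ B) ⊕ Γ(B)`, where `Γ(A)` and `Γ(B)` are embedded via the
two inclusions and the middle summand corresponds to the cross effect
`(a, b) ↦ [ι₁ a, ι₂ b] = γ(ι₁ a + ι₂ b) − γ(ι₁ a) − γ(ι₂ b)`. -/
theorem gamma_of_direct_sum {A B ΓA ΓB ΓAB : Type u}
    [AddCommGroup A] [AddCommGroup B] [AddCommGroup ΓA] [AddCommGroup ΓB]
    [AddCommGroup ΓAB]
    (γA : A → ΓA) (hA : IsUniversalQuadratic γA)
    (γB : B → ΓB) (hB : IsUniversalQuadratic γB)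
    (γAB : A × B → ΓAB) (hAB : IsUniversalQuadratic γAB) :
    ∃ e : ΓAB ≃+ ΓA × (A ⊗[ℤ] B) × ΓB,
      (∀ a : A, e (γAB (a, 0)) = (γA a, 0, 0)) ∧
      (∀ b : B, e (γAB (0, b)) = (0, 0, γB b)) ∧
      (∀ (a : A) (b : B),
        e (γAB ((a, 0) + (0, b)) - γAB (a, 0) - γAB (0, b)) = (0, a ⊗ₜ[ℤ] b, 0)) := by
  classical
  have hA0 : γA 0 = 0 := hA.1.map_zero'
  have hB0 : γB 0 = 0 := hB.1.map_zero'
  obtain ⟨⟨hAeven, bilA, hbilA⟩, hAuniv⟩ := hA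
  obtain ⟨⟨hBeven, bilB, hbilB⟩, hBuniv⟩ := hB
  obtain ⟨hABq, hABuniv⟩ := hAB
  obtain ⟨hABeven, bilAB, hbilAB⟩ := hABq
  -- the quadratic map A × B → ΓA × (A ⊗ B) × ΓB
  have hf : IsQuadratic (fun p : A × B => ((γA p.1, p.1 ⊗ₜ[ℤ] p.2, γB p.2) :
      ΓA × (A ⊗[ℤ] B) × ΓB)) := by
    constructor
    · intro p
      show (γA (-p).1, (-p).1 ⊗ₜ[ℤ] (-p).2, γB (-p).2) = (γA p.1, p.1 ⊗ₜ[ℤ] p.2, γB p.2)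
      simp only [Prod.fst_neg, Prod.snd_neg, hAeven, hBeven, neg_tmul, tmul_neg, neg_neg]
    · refine ⟨AddMonoidHom.mk' (fun p => AddMonoidHom.mk'
        (fun q : A × B => ((bilA p.1 q.1, p.1 ⊗ₜ[ℤ] q.2 + q.1 ⊗ₜ[ℤ] p.2, bilB p.2 q.2) :
          ΓA × (A ⊗[ℤ] B) × ΓB)) ?_) ?_, ?_⟩
      · intro q r
        show (bilA _ (q + r).1, _ ⊗ₜ[ℤ] (q + r).2 + (q + r).1 ⊗ₜ[ℤ] _, bilB _ (q + r).2) = _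
        simp only [Prod.fst_add, Prod.snd_add, map_add, tmul_add, add_tmul, Prod.mk_add_mk,
          Prod.mk.injEq]
        exact ⟨trivial, by abel, trivial⟩
      · intro p p'
        refine AddMonoidHom.ext fun q => ?_
        show (bilA (p + p').1 q.1, (p + p').1 ⊗ₜ[ℤ] q.2 + q.1 ⊗ₜ[ℤ] (p + p').2,
          bilB (p + p').2 q.2) = _
        simp only [AddMonoidHom.mk'_apply, Prod.fst_add, Prod.snd_add, map_add,
          AddMonoidHom.add_apply, tmul_add, add_tmul, Prod.mk_add_mk, Prod.mk.injEq]
        exact ⟨trivial, by abel, trivial⟩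
      · intro p q
        show (γA (p + q).1, (p + q).1 ⊗ₜ[ℤ] (p + q).2, γB (p + q).2)
          - (γA p.1, p.1 ⊗ₜ[ℤ] p.2, γB p.2) - (γA q.1, q.1 ⊗ₜ[ℤ] q.2, γB q.2)
          = (bilA p.1 q.1, p.1 ⊗ₜ[ℤ] q.2 + q.1 ⊗ₜ[ℤ] p.2, bilB p.2 q.2)
        simp only [Prod.fst_add, Prod.snd_add, Prod.mk_sub_mk, tmul_add, add_tmul,
          Prod.mk.injEq]
        refine ⟨?_, ?_, ?_⟩
        · simpa using hbilA p.1 q.1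
        · abel
        · simpa using hbilB p.2 q.2
  obtain ⟨F, hF, -⟩ := hABuniv (ΓA × (A ⊗[ℤ] B) × ΓB)
    (fun p : A × B => (γA p.1, p.1 ⊗ₜ[ℤ] p.2, γB p.2)) hf
  have hFγ : ∀ p : A × B, F (γAB p) = (γA p.1, p.1 ⊗ₜ[ℤ] p.2, γB p.2) := fun p => hF p
  -- G₁ : ΓA →+ ΓAB
  have hq1 : IsQuadratic (fun a : A => γAB (a, 0)) := by
    constructor
    · intro a
      show γAB (-a, 0) = γAB (a, 0)
      rw [show ((-a, 0) : A × B) = -(a, 0) by simp, hABeven]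
    · refine ⟨AddMonoidHom.mk' (fun a => AddMonoidHom.mk'
        (fun a' : A => bilAB (a, 0) (a', 0)) ?_) ?_, ?_⟩
      · intro a' a''
        show bilAB (a, 0) (a' + a'', 0) = bilAB (a, 0) (a', 0) + bilAB (a, 0) (a'', 0)
        rw [show ((a' + a'', 0) : A × B) = (a', 0) + (a'', 0) by simp, map_add]
      · intro a a'
        ext a''
        show bilAB (a + a', 0) (a'', 0) = bilAB (a, 0) (a'', 0) + bilAB (a', 0) (a'', 0)
        rw [show ((a + a', 0) : A × B) = (a, 0) + (a', 0) by simp, map_add,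
          AddMonoidHom.add_apply]
      · intro a a'
        show γAB (a + a', 0) - γAB (a, 0) - γAB (a', 0) = bilAB (a, 0) (a', 0)
        rw [show ((a + a', 0) : A × B) = (a, 0) + (a', 0) by simp]
        exact hbilAB (a, 0) (a', 0)
  obtain ⟨G₁, hG₁', -⟩ := hAuniv ΓAB (fun a => γAB (a, 0)) hq1
  have hG₁ : ∀ a : A, G₁ (γA a) = γAB (a, 0) := fun a => hG₁' a
  have hq3 : IsQuadratic (fun b : B => γAB (0, b)) := by
    constructor
    · intro b
      show γAB (0, -b) = γAB (0, b)
      rw [show ((0, -b) : A × B) = -(0, b) by simp, hABeven]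
    · refine ⟨AddMonoidHom.mk' (fun b => AddMonoidHom.mk'
        (fun b' : B => bilAB (0, b) (0, b')) ?_) ?_, ?_⟩
      · intro b' b''
        show bilAB (0, b) (0, b' + b'') = bilAB (0, b) (0, b') + bilAB (0, b) (0, b'')
        rw [show ((0, b' + b'') : A × B) = (0, b') + (0, b'') by simp, map_add]
      · intro b b'
        ext b''
        show bilAB (0, b + b') (0, b'') = bilAB (0, b) (0, b'') + bilAB (0, b') (0, b'')
        rw [show ((0, b + b') : A × B) = (0, b) + (0, b') by simp, map_add,
          AddMonoidHom.add_apply]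
      · intro b b'
        show γAB (0, b + b') - γAB (0, b) - γAB (0, b') = bilAB (0, b) (0, b')
        rw [show ((0, b + b') : A × B) = (0, b) + (0, b') by simp]
        exact hbilAB (0, b) (0, b')
  obtain ⟨G₃, hG₃', -⟩ := hBuniv ΓAB (fun b => γAB (0, b)) hq3
  have hG₃ : ∀ b : B, G₃ (γB b) = γAB (0, b) := fun b => hG₃' b
  -- G₂ : A ⊗ B →+ ΓAB via the cross effect
  let L : A ⊗[ℤ] B →ₗ[ℤ] ΓAB := TensorProduct.lift (LinearMap.mk₂ ℤ
    (fun a b => bilAB (a, 0) (0, b))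
    (fun a a' b => by
      show bilAB (a + a', 0) (0, b) = bilAB (a, 0) (0, b) + bilAB (a', 0) (0, b)
      rw [show ((a + a', 0) : A × B) = (a, 0) + (a', 0) by simp, map_add,
        AddMonoidHom.add_apply])
    (fun z a b => by
      show bilAB (z • a, 0) (0, b) = z • bilAB (a, 0) (0, b)
      rw [show ((z • a, 0) : A × B) = z • (a, 0) by simp, map_zsmul,
        AddMonoidHom.smul_apply])
    (fun a b b' => by
      show bilAB (a, 0) (0, b + b') = bilAB (a, 0) (0, b) + bilAB (a, 0) (0, b')
      rw [show ((0, b + b') : A × B) = (0, b) + (0, b') by simp, map_add])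
    (fun z a b => by
      show bilAB (a, 0) (0, z • b) = z • bilAB (a, 0) (0, b)
      rw [show ((0, z • b) : A × B) = z • (0, b) by simp, map_zsmul]))
  have hL : ∀ (a : A) (b : B), L (a ⊗ₜ[ℤ] b) = bilAB (a, 0) (0, b) := fun a b => rfl
  -- key cross-effect identity
  have hcross : ∀ (a : A) (b : B),
      bilAB (a, 0) (0, b) = γAB (a, b) - γAB (a, 0) - γAB (0, b) := by
    intro a b
    have h := hbilAB (a, 0) (0, b)
    rw [show ((a, 0) : A × B) + (0, b) = (a, b) by simp] at h
    exact h.symm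
  -- G : ΓA × (A ⊗ B) × ΓB →+ ΓAB
  let G : ΓA × (A ⊗[ℤ] B) × ΓB →+ ΓAB :=
    AddMonoidHom.mk' (fun w => G₁ w.1 + L w.2.1 + G₃ w.2.2) (by
      intro w w'
      show G₁ (w + w').1 + L (w + w').2.1 + G₃ (w + w').2.2 = _
      simp only [Prod.fst_add, Prod.snd_add, map_add]
      abel)
  have hG : ∀ w : ΓA × (A ⊗[ℤ] B) × ΓB, G w = G₁ w.1 + L w.2.1 + G₃ w.2.2 := fun _ => rfl
  -- left inverse: G ∘ F = id
  have hGF : ∀ x : ΓAB, G (F x) = x := by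
    have key := uq_hom_ext ⟨⟨hABeven, bilAB, hbilAB⟩, hABuniv⟩ (G.comp F)
      (AddMonoidHom.id ΓAB) ?_
    · intro x
      exact congrArg (fun H : ΓAB →+ ΓAB => H x) key
    · intro p
      simp only [AddMonoidHom.coe_comp, Function.comp_apply, AddMonoidHom.id_apply]
      rw [hFγ p, hG]
      simp only [hG₁, hG₃, hL, hcross]
      rw [show ((p.1, p.2) : A × B) = p from rfl]
      abel
  -- F (L y) = (0, y, 0)
  have hFL : ∀ y : A ⊗[ℤ] B, F (L y) = (0, y, 0) := by
    intro y
    induction y using TensorProduct.induction_on with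
    | zero => simp; rfl
    | tmul a b =>
      rw [hL, hcross, map_sub, map_sub, hFγ, hFγ, hFγ]
      simp only [hA0, hB0, tmul_zero, zero_tmul, Prod.mk_sub_mk, Prod.mk.injEq]
      refine ⟨by abel, by abel, by abel⟩
    | add y z hy hz =>
      rw [map_add, map_add, hy, hz]
      simp [Prod.mk_add_mk]
  -- F (G₁ x) = (x, 0, 0)
  have hFG₁ : ∀ x : ΓA, F (G₁ x) = (x, 0, 0) := by
    have key := uq_hom_ext ⟨⟨hAeven, bilA, hbilA⟩, hAuniv⟩ (F.comp G₁)
      (AddMonoidHom.mk' (fun x => ((x, 0, 0) : ΓA × (A ⊗[ℤ] B) × ΓB))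
        (by intro x y; simp [Prod.mk_add_mk])) ?_
    · intro x
      exact congrArg (fun H : ΓA →+ _ => H x) key
    · intro a
      simp only [AddMonoidHom.coe_comp, Function.comp_apply, AddMonoidHom.mk'_apply]
      rw [hG₁, hFγ]
      simp [hB0, tmul_zero]
  have hFG₃ : ∀ z : ΓB, F (G₃ z) = (0, 0, z) := by
    have key := uq_hom_ext ⟨⟨hBeven, bilB, hbilB⟩, hBuniv⟩ (F.comp G₃)
      (AddMonoidHom.mk' (fun z => ((0, 0, z) : ΓA × (A ⊗[ℤ] B) × ΓB))
        (by intro x y; simp [Prod.mk_add_mk])) ?_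
    · intro z
      exact congrArg (fun H : ΓB →+ _ => H z) key
    · intro b
      simp only [AddMonoidHom.coe_comp, Function.comp_apply, AddMonoidHom.mk'_apply]
      rw [hG₃, hFγ]
      simp [hA0, zero_tmul]
  have hFG : ∀ w : ΓA × (A ⊗[ℤ] B) × ΓB, F (G w) = w := by
    rintro ⟨x, y, z⟩
    rw [hG]
    simp only [map_add, hFG₁, hFL, hFG₃]
    simp [Prod.mk_add_mk]
  let e : ΓAB ≃+ ΓA × (A ⊗[ℤ] B) × ΓB :=
    { toFun := F
      invFun := G
      left_inv := hGF
      right_inv := hFG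
      map_add' := F.map_add }
  refine ⟨e, ?_, ?_, ?_⟩
  · intro a
    show F (γAB (a, 0)) = _
    rw [hFγ]
    simp [hB0, tmul_zero]
  · intro b
    show F (γAB (0, b)) = _
    rw [hFγ]
    simp [hA0, zero_tmul]
  · intro a b
    show F (γAB ((a, 0) + (0, b)) - γAB (a, 0) - γAB (0, b)) = _
    rw [show ((a, 0) : A × B) + (0, b) = (a, b) by simp, map_sub, map_sub, hFγ, hFγ, hFγ]
    simp only [hA0, hB0, tmul_zero, zero_tmul, Prod.mk_sub_mk, Prod.mk.injEq]
    refine ⟨by abel, by abel, by abel⟩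
end

section
/- Let A be a free abelian group with basis {e_i}. Then Γ(A) is a free abelian group with basis {γ(e_i)} ∪ {[e_i, e_j] : i < j}, where [x,y] = γ(x+y) − γ(x) − γ(y). -/
universe u v

section Aux

variable {A G : Type*} [AddCommGroup A] [AddCommGroup G]
variable (γ : A → G) (β : A →+ A →+ G)
variable (hβ : ∀ a b, γ (a + b) - γ a - γ b = β a b) (hneg : ∀ a, γ (-a) = γ a)

include hβ

lemma quad_zero : γ 0 = 0 := by
  have h := hβ 0 0
  simpa using h

include hneg

lemma quad_diag (a : A) : β a a = γ a + γ a := by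
  have h := hβ a (-a)
  rw [add_neg_cancel, quad_zero γ β hβ, map_neg, hneg] at h
  apply neg_injective
  rw [← h]; abel

lemma quad_nsmul (a : A) (n : ℕ) : γ (n • a) = n ^ 2 • γ a := by
  induction n with
  | zero => simpa using quad_zero γ β hβ
  | succ n ih =>
    have h2 : γ (n • a + a) = γ (n • a) + γ a + β (n • a) a := by
      rw [← hβ]; abel
    have hb : β (n • a) a = n • (γ a + γ a) := by
      rw [map_nsmul]
      simp [quad_diag γ β hβ hneg a]
    have hn : (n + 1) ^ 2 = n ^ 2 + n + n + 1 := by ring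
    rw [succ_nsmul, h2, ih, hb, hn]
    simp [add_smul, smul_add]
    abel

lemma quad_zsmul (a : A) (c : ℤ) : γ (c • a) = c ^ 2 • γ a := by
  obtain ⟨m, rfl | rfl⟩ := c.eq_nat_or_neg
  · rw [natCast_zsmul, quad_nsmul γ β hβ hneg a m, ← Nat.cast_pow, natCast_zsmul]
  · have h1 : (-(m : ℤ)) • a = -((m : ℕ) • a) := by simp [natCast_zsmul]
    rw [h1, hneg, quad_nsmul γ β hβ hneg a m]
    have h2 : (-(m : ℤ)) ^ 2 = ((m ^ 2 : ℕ) : ℤ) := by push_cast; ring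
    rw [h2, natCast_zsmul]

omit hneg in
lemma quad_symm (a b : A) : β a b = β b a := by
  rw [← hβ, ← hβ, add_comm a b]
  abel

end Aux

section Cons

variable {ι : Type*} [LinearOrder ι]

/-- Raw coordinate function of the model quadratic map. -/
def qRaw (x : ι →₀ ℤ) : (ι ⊕ {p : ι × ι // p.1 < p.2}) → ℤ :=
  Sum.elim (fun i => x i ^ 2) (fun p => x p.1.1 * x p.1.2)

lemma qRaw_finite (x : ι →₀ ℤ) : (Function.support (qRaw x)).Finite := by
  apply Set.Finite.subset ((x.support.finite_toSet.image Sum.inl).union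
    (((x.support.finite_toSet.prod x.support.finite_toSet).preimage
      Subtype.val_injective.injOn).image Sum.inr))
  intro k hk
  rcases k with i | p
  · left
    refine ⟨i, ?_, rfl⟩
    simp only [Function.mem_support, qRaw, Sum.elim_inl] at hk
    simp only [Finset.coe_sort_coe, Finset.mem_coe, Finsupp.mem_support_iff]
    exact fun h => hk (by rw [h]; ring)
  · right
    refine ⟨p, ?_, rfl⟩
    simp only [Function.mem_support, qRaw, Sum.elim_inr, mul_ne_zero_iff] at hk
    exact ⟨by simpa using hk.1, by simpa using hk.2⟩

/-- The model quadratic map on coordinates. -/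
noncomputable def qF (x : ι →₀ ℤ) : (ι ⊕ {p : ι × ι // p.1 < p.2}) →₀ ℤ :=
  Finsupp.ofSupportFinite (qRaw x) (qRaw_finite x)

/-- Raw coordinate function of the model cross effect. -/
def bRaw (x y : ι →₀ ℤ) : (ι ⊕ {p : ι × ι // p.1 < p.2}) → ℤ :=
  Sum.elim (fun i => 2 * (x i * y i))
    (fun p => x p.1.1 * y p.1.2 + x p.1.2 * y p.1.1)

lemma bRaw_finite (x y : ι →₀ ℤ) : (Function.support (bRaw x y)).Finite := by
  apply Set.Finite.subset (((x.support.finite_toSet.image Sum.inl)).union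
    ((((x.support.finite_toSet.prod y.support.finite_toSet).union
        (y.support.finite_toSet.prod x.support.finite_toSet)).preimage
      Subtype.val_injective.injOn).image Sum.inr))
  intro k hk
  rcases k with i | p
  · left
    refine ⟨i, ?_, rfl⟩
    simp only [Function.mem_support, bRaw, Sum.elim_inl, mul_ne_zero_iff] at hk
    simpa using hk.2.1
  · right
    refine ⟨p, ?_, rfl⟩
    simp only [Function.mem_support, bRaw, Sum.elim_inr] at hk
    have : x p.1.1 * y p.1.2 ≠ 0 ∨ x p.1.2 * y p.1.1 ≠ 0 := by
      by_contra h
      push_neg at h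
      exact hk (by rw [h.1, h.2]; ring)
    rcases this with h | h <;> rw [mul_ne_zero_iff] at h
    · left; exact ⟨by simpa using h.1, by simpa using h.2⟩
    · right; exact ⟨by simpa using h.2, by simpa using h.1⟩

/-- The model cross effect on coordinates. -/
noncomputable def bF (x y : ι →₀ ℤ) : (ι ⊕ {p : ι × ι // p.1 < p.2}) →₀ ℤ :=
  Finsupp.ofSupportFinite (bRaw x y) (bRaw_finite x y)

lemma qF_apply (x : ι →₀ ℤ) (k) : qF x k = qRaw x k := rfl
lemma bF_apply (x y : ι →₀ ℤ) (k) : bF x y k = bRaw x y k := rfl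

lemma qF_neg (x : ι →₀ ℤ) : qF (-x) = qF x := by
  ext k
  rcases k with i | p <;> simp [qF_apply, qRaw] <;> ring

lemma qF_add (x y : ι →₀ ℤ) : qF (x + y) = qF x + qF y + bF x y := by
  ext k
  rcases k with i | p <;>
    simp [qF_apply, bF_apply, qRaw, bRaw, Finsupp.add_apply] <;> ring

lemma bF_symm (x y : ι →₀ ℤ) : bF x y = bF y x := by
  ext k
  rcases k with i | p <;> simp [bF_apply, bRaw] <;> ring

lemma bF_add_left (x x' y : ι →₀ ℤ) : bF (x + x') y = bF x y + bF x' y := by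
  ext k
  rcases k with i | p <;>
    simp [bF_apply, bRaw, Finsupp.add_apply] <;> ring

lemma bF_add_right (x y y' : ι →₀ ℤ) : bF x (y + y') = bF x y + bF x y' := by
  ext k
  rcases k with i | p <;>
    simp [bF_apply, bRaw, Finsupp.add_apply] <;> ring

lemma qF_zero : qF (0 : ι →₀ ℤ) = 0 := by
  ext k
  rcases k with i | p <;> simp [qF_apply, qRaw]

section Cons2
variable {ι : Type*} [LinearOrder ι]

lemma qF_single (i : ι) (c : ℤ) :
    qF (Finsupp.single i c) = Finsupp.single (Sum.inl i) (c ^ 2) := by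
  ext k
  rcases k with j | p
  · rw [qF_apply]
    show (Finsupp.single i c) j ^ 2 = Finsupp.single (Sum.inl i) (c ^ 2) (Sum.inl j)
    rcases eq_or_ne i j with rfl | h
    · simp
    · rw [Finsupp.single_eq_of_ne' h, Finsupp.single_eq_of_ne' (by simp [h])]
      ring
  · rw [qF_apply, Finsupp.single_eq_of_ne' (by simp)]
    show (Finsupp.single i c) p.1.1 * (Finsupp.single i c) p.1.2 = 0
    rcases eq_or_ne i p.1.1 with h1 | h1
    · rcases eq_or_ne i p.1.2 with h2 | h2
      · exact absurd p.2 (by rw [← h1, ← h2]; exact lt_irrefl i)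
      · rw [Finsupp.single_eq_of_ne' h2, mul_zero]
    · rw [Finsupp.single_eq_of_ne' h1, zero_mul]

lemma bF_single_single_eq (i : ι) (c d : ℤ) :
    bF (Finsupp.single i c) (Finsupp.single i d) =
      Finsupp.single (Sum.inl i) (2 * (c * d)) := by
  ext k
  rcases k with j | p
  · rw [bF_apply]
    show 2 * ((Finsupp.single i c) j * (Finsupp.single i d) j) =
      Finsupp.single (Sum.inl i) (2 * (c * d)) (Sum.inl j)
    rcases eq_or_ne i j with rfl | h
    · simp
    · rw [Finsupp.single_eq_of_ne' h,
        Finsupp.single_eq_of_ne' (show Sum.inl i ≠ Sum.inl j from by simp [h])]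
      ring
  · rw [bF_apply, Finsupp.single_eq_of_ne' (by simp)]
    show (Finsupp.single i c) p.1.1 * (Finsupp.single i d) p.1.2 +
      (Finsupp.single i c) p.1.2 * (Finsupp.single i d) p.1.1 = 0
    rcases eq_or_ne i p.1.1 with h1 | h1
    · rcases eq_or_ne i p.1.2 with h2 | h2
      · exact absurd p.2 (by rw [← h1, ← h2]; exact lt_irrefl i)
      · rw [Finsupp.single_eq_of_ne' h2, Finsupp.single_eq_of_ne' h2]
        ring
    · rw [Finsupp.single_eq_of_ne' h1, Finsupp.single_eq_of_ne' h1]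
      ring

lemma bF_single_single_lt {i j : ι} (hij : i < j) (c d : ℤ) :
    bF (Finsupp.single i c) (Finsupp.single j d) =
      Finsupp.single (Sum.inr ⟨(i, j), hij⟩) (c * d) := by
  ext k
  rcases k with l | p
  · rw [bF_apply, Finsupp.single_eq_of_ne' (by simp)]
    show 2 * ((Finsupp.single i c) l * (Finsupp.single j d) l) = 0
    rcases eq_or_ne i l with rfl | h1
    · rw [Finsupp.single_eq_of_ne' hij.ne']
      ring
    · rw [Finsupp.single_eq_of_ne' h1]
      ring
  · rw [bF_apply]
    show (Finsupp.single i c) p.1.1 * (Finsupp.single j d) p.1.2 +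
      (Finsupp.single i c) p.1.2 * (Finsupp.single j d) p.1.1 =
      Finsupp.single (Sum.inr ⟨(i, j), hij⟩) (c * d) (Sum.inr p)
    rcases eq_or_ne (⟨(i, j), hij⟩ : {p : ι × ι // p.1 < p.2}) p with rfl | hp
    · simp [Finsupp.single_apply, hij.ne, hij.ne']
    · rw [Finsupp.single_eq_of_ne' (fun h => hp (Sum.inr_injective h))]
      have hp' : ¬(i = p.1.1 ∧ j = p.1.2) := by
        rintro ⟨ha, hb⟩
        exact hp (Subtype.ext (Prod.ext ha.symm hb.symm).symm)
      rcases eq_or_ne i p.1.1 with h1 | h1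
      · have h2 : j ≠ p.1.2 := fun h => hp' ⟨h1, h⟩
        have h5 : i ≠ p.1.2 := fun h => absurd p.2 (by rw [← h1, ← h]; exact lt_irrefl i)
        rw [Finsupp.single_eq_of_ne' h2, Finsupp.single_eq_of_ne' h5]
        ring
      · rw [Finsupp.single_eq_of_ne' h1]
        rcases eq_or_ne i p.1.2 with h2 | h2
        · have h4 : j ≠ p.1.1 := by
            intro h
            exact absurd p.2 (by rw [← h2, ← h]; exact lt_asymm hij)
          rw [Finsupp.single_eq_of_ne' h4]
          ring
        · rw [Finsupp.single_eq_of_ne' h2]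
          ring

end Cons2
section Lift

variable {ι : Type*} [LinearOrder ι] {A G : Type*} [AddCommGroup A] [AddCommGroup G]

lemma bF_zero_right (x : ι →₀ ℤ) : bF x (0 : ι →₀ ℤ) = 0 := by
  ext k
  rcases k with i | p <;> simp [bF_apply, bRaw]

/-- The homomorphism from the free model to `G` sending basis vectors to
`γ(e_i)` and `[e_i, e_j]`. -/
noncomputable def FinG (b : Module.Basis ι ℤ A) (γ : A → G) :
    ((ι ⊕ {p : ι × ι // p.1 < p.2}) →₀ ℤ) →+ G :=
  Finsupp.liftAddHom fun k => zmultiplesHom G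
    (Sum.elim (fun i => γ (b i))
      (fun p => γ (b p.1.1 + b p.1.2) - γ (b p.1.1) - γ (b p.1.2)) k)

lemma FinG_single_inl (b : Module.Basis ι ℤ A) (γ : A → G) (i : ι) (c : ℤ) :
    FinG b γ (Finsupp.single (Sum.inl i) c) = c • γ (b i) := by
  simp [FinG]

lemma FinG_single_inr (b : Module.Basis ι ℤ A) (γ : A → G) (p : {p : ι × ι // p.1 < p.2}) (c : ℤ) :
    FinG b γ (Finsupp.single (Sum.inr p) c) =
      c • (γ (b p.1.1 + b p.1.2) - γ (b p.1.1) - γ (b p.1.2)) := by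
  simp [FinG]

variable (b : Module.Basis ι ℤ A) (γ : A → G) (β : A →+ A →+ G)
variable (hβ : ∀ a b, γ (a + b) - γ a - γ b = β a b) (hneg : ∀ a, γ (-a) = γ a)

include hβ

lemma bil_smul (x y : A) (c d : ℤ) : β (c • x) (d • y) = (c * d) • β x y := by
  have h1 : β (c • x) = c • β x := map_zsmul β c x
  rw [h1, AddMonoidHom.smul_apply, map_zsmul, smul_smul]

include hneg

lemma FinG_bF_single (i : ι) (c : ℤ) (y : ι →₀ ℤ) :
    FinG b γ (bF (Finsupp.single i c) y) = β (c • b i) (b.repr.symm y) := by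
  induction y using Finsupp.induction with
  | zero => rw [bF_zero_right, map_zero, map_zero, map_zero]
  | single_add j d f hjf hd ih =>
    rw [bF_add_right, map_add, ih, map_add, map_add]
    congr 1
    rw [Module.Basis.repr_symm_single]
    rcases lt_trichotomy i j with h | h | h
    · rw [bF_single_single_lt h, FinG_single_inr, hβ, bil_smul γ β hβ]
    · subst h
      rw [bF_single_single_eq, FinG_single_inl, bil_smul γ β hβ,
        quad_diag γ β hβ hneg]
      have h2 : 2 * (c * d) = c * d + c * d := by ring
      rw [h2, add_smul, smul_add]
    · rw [bF_symm, bF_single_single_lt h, FinG_single_inr, hβ,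
        quad_symm γ β hβ, bil_smul γ β hβ, mul_comm d c]

lemma FinG_qF (x : ι →₀ ℤ) : FinG b γ (qF x) = γ (b.repr.symm x) := by
  induction x using Finsupp.induction with
  | zero => rw [qF_zero, map_zero, map_zero, quad_zero γ β hβ]
  | single_add i c f hif hc ih =>
    rw [qF_add, map_add, map_add, ih, qF_single, FinG_single_inl,
      FinG_bF_single b γ β hβ hneg, map_add, Module.Basis.repr_symm_single]
    have hexp : γ (c • b i + b.repr.symm f) =
        β (c • b i) (b.repr.symm f) + γ (c • b i) + γ (b.repr.symm f) := by
      rw [← hβ]; abel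
    rw [hexp, quad_zsmul γ β hβ hneg (b i) c]
    abel

end Lift
/-- If `A` is free abelian with basis `{e_i}`, then `Γ(A)` is free abelian with basis
`{γ(e_i)} ∪ {[e_i, e_j] : i < j}`, where `[x, y] = γ(x+y) − γ(x) − γ(y)`. -/
theorem gamma_of_free_abelian_basis {A G : Type u} [AddCommGroup A] [AddCommGroup G]
    {ι : Type u} [LinearOrder ι] (b : Module.Basis ι ℤ A)
    (γ : A → G) (hγ : IsUniversalQuadratic γ) :
    ∃ B : Module.Basis (ι ⊕ {p : ι × ι // p.1 < p.2}) ℤ G,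
      (∀ i : ι, B (Sum.inl i) = γ (b i)) ∧
      (∀ p : {p : ι × ι // p.1 < p.2},
        B (Sum.inr p) = γ (b p.val.1 + b p.val.2) - γ (b p.val.1) - γ (b p.val.2)) := by
  classical
  obtain ⟨⟨hneg, β, hβ⟩, huniv⟩ := hγ
  -- the model quadratic map
  have hg_quad : IsQuadratic (fun a => qF (b.repr a)) := by
    refine ⟨fun a => by simp only [map_neg, qF_neg], ?_⟩
    refine ⟨AddMonoidHom.mk' (fun a => AddMonoidHom.mk'
      (fun a' => bF (b.repr a) (b.repr a')) ?_) ?_, ?_⟩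
    · intro x y
      show bF (b.repr a) (b.repr (x + y)) = _
      rw [map_add, bF_add_right]
    · intro x y
      refine AddMonoidHom.ext fun a' => ?_
      simp only [AddMonoidHom.mk'_apply, AddMonoidHom.add_apply, map_add, bF_add_left]
    · intro a a'
      simp only [AddMonoidHom.mk'_apply, map_add, qF_add]
      abel
  obtain ⟨F, hF, -⟩ := huniv ((ι ⊕ {p : ι × ι // p.1 < p.2}) →₀ ℤ) _ hg_quad
  have hFγ : ∀ a, F (γ a) = qF (b.repr a) := hF
  -- the inverse homomorphism
  set F' : ((ι ⊕ {p : ι × ι // p.1 < p.2}) →₀ ℤ) →+ G := FinG b γ with hF'def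
  have hK : ∀ a, F' (F (γ a)) = γ a := by
    intro a
    rw [hFγ a, hF'def, FinG_qF b γ β hβ hneg, b.repr.symm_apply_apply]
  obtain ⟨Fid, hFid, hFiduniq⟩ := huniv G γ ⟨hneg, β, hβ⟩
  have h1 : F'.comp F = AddMonoidHom.id G := by
    rw [hFiduniq (F'.comp F) hK, hFiduniq (AddMonoidHom.id G) (fun a => rfl)]
  have h2 : F.comp F' = AddMonoidHom.id _ := by
    apply Finsupp.addHom_ext
    intro k c
    rcases k with i | p
    · rw [AddMonoidHom.comp_apply, hF'def, FinG_single_inl, map_zsmul, hFγ (b i),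
        Module.Basis.repr_self, qF_single, AddMonoidHom.id_apply]
      rw [Finsupp.smul_single]
      norm_num
    · rw [AddMonoidHom.comp_apply, hF'def, FinG_single_inr, map_zsmul,
        AddMonoidHom.id_apply]
      have hone : F (γ (b p.1.1 + b p.1.2) - γ (b p.1.1) - γ (b p.1.2)) =
          Finsupp.single (Sum.inr p) 1 := by
        rw [map_sub, map_sub, hFγ, hFγ, hFγ, map_add, qF_add,
          Module.Basis.repr_self, Module.Basis.repr_self, bF_single_single_lt p.2]
        have hpe : (⟨(p.1.1, p.1.2), p.2⟩ : {p : ι × ι // p.1 < p.2}) = p :=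
          Subtype.ext rfl
        rw [hpe]
        norm_num
        abel
      rw [hone, Finsupp.smul_single]
      norm_num
  -- the additive equivalence
  let e : ((ι ⊕ {p : ι × ι // p.1 < p.2}) →₀ ℤ) ≃+ G :=
    { toFun := F'
      invFun := F
      left_inv := fun m => DFunLike.congr_fun h2 m
      right_inv := fun x => DFunLike.congr_fun h1 x
      map_add' := F'.map_add }
  refine ⟨(Finsupp.basisSingleOne).map e.toIntLinearEquiv, ?_, ?_⟩
  · intro i
    rw [Module.Basis.map_apply]
    show e (Finsupp.basisSingleOne (Sum.inl i)) = γ (b i)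
    rw [Finsupp.coe_basisSingleOne]
    show F' (Finsupp.single (Sum.inl i) 1) = γ (b i)
    rw [hF'def, FinG_single_inl, one_smul]
  · intro p
    rw [Module.Basis.map_apply]
    show e (Finsupp.basisSingleOne (Sum.inr p)) = _
    rw [Finsupp.coe_basisSingleOne]
    show F' (Finsupp.single (Sum.inr p) 1) = _
    rw [hF'def, FinG_single_inr, one_smul]
end Cons
end
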